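/- Let G be a group and H ≤ G a finitely generated subgroup which admits a nonempty strongly aperiodic SFT (over some finite alphabet), and suppose that for every g ∈ G with g ≠ 1 there exist t ∈ G, an integer n > 0 and h ∈ H with h ≠ 1 such that (t g t⁻¹)^n = h (i.e. Cl(g) ∩ R_G(H \ {1}) ≠ ∅). Then G admits a nonempty strongly aperiodic SFT. -/

import Mathlib

variable {G A : Type*}

/-- The left shift action of a group on configurations: `(shift g x) h = x (g⁻¹ * h)`. -/
def shift [Group G] (g : G) (x : G → A) : G → A := fun h => x (g⁻¹ * h)

/-- The subshift of finite type on `G` defined by the shape `F` and the pattern set `L`: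
all configurations `x` such that for every `g`, the restriction of `g • x` to `F` lies in `L`. -/
def SFT [Group G] (F : Set G) (L : Set (F → A)) : Set (G → A) :=
  {x | ∀ g : G, (fun f : F => shift g x f) ∈ L}

/-- The subshift of finite type on the subgroup `H` defined by the shape `F ⊆ H`
and the pattern set `L`. -/
def SFTon [Group G] (H : Subgroup G) (F : Set G) (hF : F ⊆ (H : Set G)) (L : Set (F → A)) :
    Set (↥H → A) :=
  {y | ∀ h : ↥H, (fun f : F => y (h⁻¹ * ⟨(f : G), hF f.2⟩)) ∈ L}

/-- The free part of a subshift: elements acting freely on every configuration. -/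
def freePart [Group G] (X : Set (G → A)) : Set G := {g | ∀ x ∈ X, shift g x ≠ x}

lemma shift_mul' {G A : Type*} [Group G] (a b : G) (x : G → A) :
    shift (a * b) x = shift a (shift b x) := by
  funext k; simp [shift, mul_assoc]

lemma shift_pow' {G A : Type*} [Group G] (a : G) (x : G → A) (hx : shift a x = x) (n : ℕ) :
    shift (a ^ n) x = x := by
  induction n with
  | zero => funext k; simp [shift]
  | succ n ih => rw [pow_succ, shift_mul', hx, ih]

/-- If a finitely generated subgroup `H ≤ G` admits a nonempty strongly
aperiodic SFT and every nontrivial element of `G` has a conjugate with a positive power equal to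
a nontrivial element of `H`, then `G` admits a nonempty strongly aperiodic SFT. -/
theorem exists_SA_SFT_of_subgroup
    {G : Type*} [Group G] (H : Subgroup G) (hHfg : H.FG)
    (hHsft : ∃ (A : Type) (_ : Finite A) (F : Set ↥H) (_ : F.Finite) (L : Set (F → A)),
        (SFT F L).Nonempty ∧ ∀ y ∈ SFT F L, ∀ h : ↥H, shift h y = y → h = 1)
    (hcond : ∀ g : G, g ≠ 1 → ∃ t : G, ∃ n : ℕ, 0 < n ∧
        ∃ h : ↥H, (h : G) ≠ 1 ∧ (t * g * t⁻¹) ^ n = (h : G)) :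
    ∃ (A : Type) (_ : Finite A) (F : Set G) (_ : F.Finite) (L : Set (F → A)),
        (SFT F L).Nonempty ∧ ∀ x ∈ SFT F L, ∀ g : G, shift g x = x → g = 1 := by
  classical
  obtain ⟨A, hA, F, hFfin, L, ⟨y0, hy0⟩, hSA⟩ := hHsft
  have hmemF' : ∀ f : F, (↑↑f : G) ∈ (Subtype.val '' F : Set G) := fun f => ⟨↑f, f.2, rfl⟩
  refine ⟨A, hA, Subtype.val '' F, hFfin.image _,
    {p : (Subtype.val '' F : Set G) → A | (fun f : F => p ⟨↑↑f, hmemF' f⟩) ∈ L}, ?_, ?_⟩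
  · -- nonemptiness: free extension via coset representatives
    set σ : G → G := fun g => ((QuotientGroup.mk g : G ⧸ H)).out with hσ
    have hσmem : ∀ g : G, (σ g)⁻¹ * g ∈ H := by
      intro g
      have : (QuotientGroup.mk (σ g) : G ⧸ H) = QuotientGroup.mk g := by
        exact QuotientGroup.out_eq' _
      exact (QuotientGroup.eq).mp this
    have hσeq : ∀ (g h : G), h ∈ H → σ (g * h) = σ g := by
      intro g h hh
      have : (QuotientGroup.mk (g * h) : G ⧸ H) = QuotientGroup.mk g :=
        (QuotientGroup.eq).mpr (by simpa [mul_assoc] using H.inv_mem hh)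
      simp [hσ, this]
    refine ⟨fun g => y0 ⟨(σ g)⁻¹ * g, hσmem g⟩, ?_⟩
    intro g
    show (fun f : F => y0 ⟨(σ (g⁻¹ * ↑↑f))⁻¹ * (g⁻¹ * ↑↑f), hσmem _⟩) ∈ L
    have key : ∀ f : F, (⟨(σ (g⁻¹ * ↑↑f))⁻¹ * (g⁻¹ * ↑↑f), hσmem _⟩ : ↥H)
        = (⟨(σ g⁻¹)⁻¹ * g⁻¹, hσmem g⁻¹⟩ : ↥H)⁻¹⁻¹ * ↑f := by
      intro f
      apply Subtype.ext
      simp [hσeq g⁻¹ ↑↑f (↑f : ↥H).2, mul_assoc]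
    simp only [key]
    exact hy0 (⟨(σ g⁻¹)⁻¹ * g⁻¹, hσmem g⁻¹⟩ : ↥H)⁻¹
  · -- strong aperiodicity
    intro x hx g hgx
    by_contra hg
    obtain ⟨t, n, hn, h, hh1, hpow⟩ := hcond g hg
    have hx' : shift t x ∈ SFT (Subtype.val '' F)
        {p : (Subtype.val '' F : Set G) → A | (fun f : F => p ⟨↑↑f, hmemF' f⟩) ∈ L} := by
      intro g'
      simp only [← shift_mul']
      exact hx (g' * t)
    have hfix : shift ((t * g * t⁻¹) ^ n) (shift t x) = shift t x := by
      apply shift_pow'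
      rw [← shift_mul']
      have e1 : t * g * t⁻¹ * t = t * g := by group
      rw [e1, shift_mul', hgx]
    rw [hpow] at hfix
    set y : ↥H → A := fun k => shift t x ↑k with hy
    have hymem : y ∈ SFT F L := by
      intro k
      exact hx' ↑k
    have hyfix : shift h y = y := by
      funext k
      exact congrFun hfix ↑k
    have h1 : h = 1 := hSA y hymem h hyfix
    exact hh1 (by simp [h1])
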